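/- arXiv:1806.00032 — 3 statements merged into one kernel-verified Lean document; each statement's English description precedes it below -/
import Mathlib

section
/- For all real numbers a₁, a₂, b₁, b₂, all natural numbers n₁, n₂, and every real number x, the connection formula holds: C_{n₁,n₂}^{(b₁,b₂)}(x) = Σ_{k=0}^{n₁} Σ_{ℓ=0}^{n₂} C(n₁,k) C(n₂,ℓ) (a₁-b₁)^k (a₂-b₂)^ℓ C_{n₁-k,n₂-ℓ}^{(a₁,a₂)}(x). -/
lemma tri_swap (n : ℕ) (f : ℕ → ℕ → ℝ) :
    ∑ k ∈ Finset.range (n + 1), ∑ j ∈ Finset.range (n - k + 1), f k j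
      = ∑ j ∈ Finset.range (n + 1), ∑ k ∈ Finset.range (n - j + 1), f k j := by
  apply Finset.sum_comm'
  intro k j
  simp only [Finset.mem_range]
  omega

lemma choose_swap {n k j : ℕ} (h : k + j ≤ n) :
    n.choose k * (n - k).choose j = n.choose j * (n - j).choose k := by
  calc n.choose k * (n - k).choose j
      = n.choose (n - k) * (n - k).choose j := by rw [Nat.choose_symm (by omega)]
    _ = n.choose j * (n - j).choose (n - k - j) :=
        Nat.choose_mul (n := n) (k := n - k) (s := j) (by omega)
    _ = n.choose j * (n - j).choose k := by
        rw [show n - k - j = (n - j) - k by omega, Nat.choose_symm (by omega)]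

lemma key (a b : ℝ) (n : ℕ) (g : ℕ → ℝ) :
    ∑ j ∈ Finset.range (n + 1), (n.choose j : ℝ) * (-b) ^ (n - j) * g j
      = ∑ k ∈ Finset.range (n + 1), (n.choose k : ℝ) * (a - b) ^ k *
          ∑ j ∈ Finset.range (n - k + 1), ((n - k).choose j : ℝ) * (-a) ^ (n - k - j) * g j := by
  rw [eq_comm]
  simp_rw [Finset.mul_sum]
  rw [tri_swap n (fun k j => (n.choose k : ℝ) * (a - b) ^ k *
      (((n - k).choose j : ℝ) * (-a) ^ (n - k - j) * g j))]
  refine Finset.sum_congr rfl fun j hj => ?_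
  have hj' : j ≤ n := by simpa [Nat.lt_succ_iff] using hj
  have : ∀ k ∈ Finset.range (n - j + 1),
      (n.choose k : ℝ) * (a - b) ^ k * (((n - k).choose j : ℝ) * (-a) ^ (n - k - j) * g j)
      = (n.choose j : ℝ) * g j * (((n - j).choose k : ℝ) * (a - b) ^ k * (-a) ^ (n - j - k)) := by
    intro k hk
    have hk' : k ≤ n - j := by simpa [Nat.lt_succ_iff] using hk
    have hc : (n.choose k : ℝ) * ((n - k).choose j : ℝ) = (n.choose j : ℝ) * ((n - j).choose k : ℝ) := by
      rw [← Nat.cast_mul, ← Nat.cast_mul, choose_swap (by omega)]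
    rw [show n - k - j = n - j - k by omega]
    linear_combination ((a - b) ^ k * (-a) ^ (n - j - k) * g j) * hc
  rw [Finset.sum_congr rfl this, ← Finset.mul_sum]
  have hb : ∑ k ∈ Finset.range (n - j + 1),
      ((n - j).choose k : ℝ) * (a - b) ^ k * (-a) ^ (n - j - k) = (-b) ^ (n - j) := by
    rw [show (-b : ℝ) = (a - b) + (-a) by ring, add_pow]
    refine Finset.sum_congr rfl fun k hk => by ring
  rw [hb]; ring

/-- The falling factorial `x⁽ⁿ⁾ = x(x-1)⋯(x-n+1)`. -/
noncomputable def fallingFactorial (x : ℝ) (n : ℕ) : ℝ :=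
  ∏ j ∈ Finset.range n, (x - j)

/-- The multiple Charlier polynomial `C_{n₁,n₂}^{(a₁,a₂)}(x)`. -/
noncomputable def charlier (a₁ a₂ : ℝ) (n₁ n₂ : ℕ) (x : ℝ) : ℝ :=
  ∑ k ∈ Finset.range (n₁ + 1), ∑ l ∈ Finset.range (n₂ + 1),
    (n₁.choose k : ℝ) * (n₂.choose l : ℝ) * (-a₁) ^ (n₁ - k) * (-a₂) ^ (n₂ - l) *
      fallingFactorial x (k + l)

/-- Connection formula between multiple Charlier polynomials with different parameters. -/
theorem charlier_connection (a₁ a₂ b₁ b₂ : ℝ) (n₁ n₂ : ℕ) (x : ℝ) :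
    charlier b₁ b₂ n₁ n₂ x =
      ∑ k ∈ Finset.range (n₁ + 1), ∑ l ∈ Finset.range (n₂ + 1),
        (n₁.choose k : ℝ) * (n₂.choose l : ℝ) * (a₁ - b₁) ^ k * (a₂ - b₂) ^ l *
          charlier a₁ a₂ (n₁ - k) (n₂ - l) x := by
  have h1 : charlier b₁ b₂ n₁ n₂ x
      = ∑ k ∈ Finset.range (n₁ + 1), (n₁.choose k : ℝ) * (-b₁) ^ (n₁ - k) *
          ∑ l ∈ Finset.range (n₂ + 1),
            (n₂.choose l : ℝ) * (-b₂) ^ (n₂ - l) * fallingFactorial x (k + l) := by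
    unfold charlier
    refine Finset.sum_congr rfl fun k _ => ?_
    rw [Finset.mul_sum]
    exact Finset.sum_congr rfl fun l _ => by ring
  rw [h1, key a₁ b₁ n₁]
  refine Finset.sum_congr rfl fun k hk => ?_
  have h2 : ∀ j, (∑ l ∈ Finset.range (n₂ + 1),
        (n₂.choose l : ℝ) * (-b₂) ^ (n₂ - l) * fallingFactorial x (j + l))
      = ∑ l ∈ Finset.range (n₂ + 1), (n₂.choose l : ℝ) * (a₂ - b₂) ^ l *
          ∑ m ∈ Finset.range (n₂ - l + 1),
            ((n₂ - l).choose m : ℝ) * (-a₂) ^ (n₂ - l - m) * fallingFactorial x (j + m) :=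
    fun j => key a₂ b₂ n₂ (fun l => fallingFactorial x (j + l))
  simp_rw [h2]
  unfold charlier
  simp_rw [Finset.mul_sum]
  rw [Finset.sum_comm]
  refine Finset.sum_congr rfl fun l _ => ?_
  refine Finset.sum_congr rfl fun j _ => ?_
  exact Finset.sum_congr rfl fun m _ => by ring
end

section
/- For all real numbers a₁, a₂, all natural numbers n₁ ≥ 0 and n₂ ≥ 1, and every real number x, the recurrence x · C_{n₁,n₂}^{(a₁,a₂)}(x) = C_{n₁+1,n₂}^{(a₁,a₂)}(x) + (a₁ + n₁ + n₂) · C_{n₁,n₂}^{(a₁,a₂)}(x) + (a₁n₁ + a₂n₂) · C_{n₁,n₂-1}^{(a₁,a₂)}(x) + a₁n₁(a₁ - a₂) · C_{n₁-1,n₂-1}^{(a₁,a₂)}(x) holds, where when n₁ = 0 the last term is zero (its coefficient a₁n₁(a₁-a₂) vanishes). -/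
open Polynomial

lemma ff_succ (x : ℝ) (n : ℕ) :
    fallingFactorial x (n + 1) = fallingFactorial x n * (x - n) := by
  simp [fallingFactorial, Finset.prod_range_succ]

noncomputable def phi (x : ℝ) : Polynomial ℝ →ₗ[ℝ] ℝ where
  toFun P := P.sum fun m c => c * fallingFactorial x m
  map_add' P Q := Polynomial.sum_add_index P Q _ (fun i => zero_mul _) (fun a b₁ b₂ => add_mul _ _ _)
  map_smul' s P := by
    simp only [RingHom.id_apply, smul_eq_mul]
    rw [Polynomial.sum_smul_index P s (fun m c => c * fallingFactorial x m) (fun i => zero_mul _)]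
    simp [Polynomial.sum_def, mul_assoc, Finset.mul_sum]

lemma phi_monomial (x : ℝ) (m : ℕ) (c : ℝ) :
    phi x (monomial m c) = c * fallingFactorial x m := by
  simp [phi, Polynomial.sum_monomial_index]

lemma phi_X_mul_key (x : ℝ) (P : Polynomial ℝ) :
    x * phi x P = phi x (X * P) + phi x (X * derivative P) := by
  induction P using Polynomial.induction_on' with
  | add p q hp hq =>
    rw [map_add, mul_add, hp, hq, mul_add, map_add, derivative_add, mul_add, map_add]; ring
  | monomial m c =>
    rw [X_mul_monomial, derivative_monomial, X_mul_monomial, phi_monomial,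
      phi_monomial, phi_monomial]
    cases m with
    | zero => simp [fallingFactorial]; ring
    | succ m =>
      rw [Nat.succ_sub_one, ff_succ x (m+1)]
      push_cast
      ring

lemma pow_eq (a : ℝ) (n : ℕ) :
    (X - Polynomial.C a) ^ n =
      ∑ k ∈ Finset.range (n + 1), monomial k ((n.choose k : ℝ) * (-a) ^ (n - k)) := by
  rw [sub_eq_add_neg, ← map_neg, (Commute.all X (Polynomial.C (-a))).add_pow]
  refine Finset.sum_congr rfl fun k _ => ?_
  rw [← map_pow, ← Polynomial.C_eq_natCast, mul_assoc, ← map_mul,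
    ← Polynomial.smul_X_eq_monomial, smul_eq_C_mul, mul_comm]
  ring_nf

lemma charlier_eq (a₁ a₂ : ℝ) (n₁ n₂ : ℕ) (x : ℝ) :
    charlier a₁ a₂ n₁ n₂ x = phi x ((X - Polynomial.C a₁) ^ n₁ * (X - Polynomial.C a₂) ^ n₂) := by
  rw [pow_eq, pow_eq, Finset.sum_mul_sum, map_sum]
  refine Finset.sum_congr rfl fun k _ => ?_
  rw [map_sum]
  refine Finset.sum_congr rfl fun l _ => ?_
  rw [monomial_mul_monomial, phi_monomial]
  ring

lemma key_s5 (a₁ a₂ : ℝ) (m₁ m₂ : ℕ) :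
    X * ((X - Polynomial.C a₁)^(m₁+1) * (X - Polynomial.C a₂)^(m₂+1))
      + X * derivative ((X - Polynomial.C a₁)^(m₁+1) * (X - Polynomial.C a₂)^(m₂+1)) =
    (X - Polynomial.C a₁) * ((X - Polynomial.C a₁)^(m₁+1) * (X - Polynomial.C a₂)^(m₂+1))
      + Polynomial.C (a₁ + ((m₁:ℝ)+1) + ((m₂:ℝ)+1)) * ((X - Polynomial.C a₁)^(m₁+1) * (X - Polynomial.C a₂)^(m₂+1))
      + Polynomial.C (a₁*((m₁:ℝ)+1) + a₂*((m₂:ℝ)+1)) * ((X - Polynomial.C a₁)^(m₁+1) * (X - Polynomial.C a₂)^m₂)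
      + Polynomial.C (a₁*((m₁:ℝ)+1)*(a₁-a₂)) * ((X - Polynomial.C a₁)^m₁ * (X - Polynomial.C a₂)^m₂) := by
  simp only [derivative_mul, derivative_pow, derivative_sub, derivative_X, derivative_C,
    sub_zero, mul_one, Nat.add_sub_cancel]
  simp only [pow_succ, map_add, map_mul, map_sub, map_one, Polynomial.C_eq_natCast, Nat.cast_add, Nat.cast_one]
  ring

lemma key0 (a₂ : ℝ) (m₂ : ℕ) (a₁ : ℝ) :
    X * ((X - Polynomial.C a₂)^(m₂+1))
      + X * derivative ((X - Polynomial.C a₂)^(m₂+1)) =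
    (X - Polynomial.C a₁) * ((X - Polynomial.C a₂)^(m₂+1))
      + Polynomial.C (a₁ + ((m₂:ℝ)+1)) * ((X - Polynomial.C a₂)^(m₂+1))
      + Polynomial.C (a₂*((m₂:ℝ)+1)) * ((X - Polynomial.C a₂)^m₂) := by
  simp only [derivative_pow, derivative_sub, derivative_X, derivative_C,
    sub_zero, mul_one, Nat.add_sub_cancel]
  simp only [pow_succ, map_add, map_mul, map_sub, map_one, Polynomial.C_eq_natCast, Nat.cast_add, Nat.cast_one]
  ring

lemma phi_C_mul (x c : ℝ) (p : Polynomial ℝ) : phi x (Polynomial.C c * p) = c * phi x p := by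
  rw [← smul_eq_C_mul, map_smul, smul_eq_mul]

/-- The recurrence `x C_{n₁,n₂} = C_{n₁+1,n₂} + (a₁+n₁+n₂) C_{n₁,n₂}
  + (a₁n₁+a₂n₂) C_{n₁,n₂-1} + a₁n₁(a₁-a₂) C_{n₁-1,n₂-1}` for `n₂ ≥ 1`.
  When `n₁ = 0` the last term vanishes since its coefficient `a₁n₁(a₁-a₂)` is zero. -/
theorem charlier_recurrence_two (a₁ a₂ : ℝ) (n₁ n₂ : ℕ) (hn₂ : 1 ≤ n₂) (x : ℝ) :
    x * charlier a₁ a₂ n₁ n₂ x =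
      charlier a₁ a₂ (n₁ + 1) n₂ x
        + (a₁ + n₁ + n₂) * charlier a₁ a₂ n₁ n₂ x
        + (a₁ * n₁ + a₂ * n₂) * charlier a₁ a₂ n₁ (n₂ - 1) x
        + a₁ * n₁ * (a₁ - a₂) * charlier a₁ a₂ (n₁ - 1) (n₂ - 1) x := by
  obtain ⟨m₂, rfl⟩ : ∃ m₂, n₂ = m₂ + 1 := ⟨n₂ - 1, (Nat.succ_pred_eq_of_pos hn₂).symm⟩
  cases n₁ with
  | zero =>
    have h := congrArg (phi x) (key0 a₂ m₂ a₁)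
    simp only [LinearMap.map_add, phi_C_mul] at h
    simp only [charlier_eq, Nat.add_sub_cancel, pow_zero, one_mul, zero_add, pow_one,
      Nat.cast_zero, mul_zero, zero_mul, add_zero, Nat.cast_add, Nat.cast_one]
    rw [phi_X_mul_key, h]
  | succ m₁ =>
    have h := congrArg (phi x) (key_s5 a₁ a₂ m₁ m₂)
    simp only [LinearMap.map_add, phi_C_mul] at h
    simp only [charlier_eq, Nat.add_sub_cancel, Nat.cast_add, Nat.cast_one]
    rw [phi_X_mul_key, h,
      show (X - Polynomial.C a₁) ^ (m₁ + 1 + 1) * (X - Polynomial.C a₂) ^ (m₂ + 1)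
        = (X - Polynomial.C a₁) * ((X - Polynomial.C a₁) ^ (m₁ + 1) * (X - Polynomial.C a₂) ^ (m₂ + 1)) from by ring]
end

section
/- Let ω ≠ 0 be real and let {P_{n₁,n₂}}_{n₁,n₂≥0} be real polynomials with deg P_{n₁,n₂} = n₁ + n₂ for all n₁, n₂. Then {P_{n₁,n₂}} is a multiple Δ_ω-Appell polynomial set if and only if the addition formula P_{n₁,n₂}(x+y) = Σ_{k₁=0}^{n₁} Σ_{k₂=0}^{n₂} C(n₁,k₁) C(n₂,k₂) P_{n₁-k₁,n₂-k₂}(x) y^{(k₁+k₂,ω)} holds for all n₁, n₂ and all real x, y. -/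
open Polynomial Finset

/-- The generalized falling factorial `x^{(n,ω)} = ∏_{j=0}^{n-1} (x - jω)`. -/
noncomputable def genFallingFactorial (ω x : ℝ) (n : ℕ) : ℝ :=
  ∏ j ∈ Finset.range n, (x - j * ω)

/-- The difference operator `Δ_ω` acting on real polynomials:
`(Δ_ω f)(x) = (f(x+ω) - f(x))/ω`. -/
noncomputable def deltaOmega (ω : ℝ) (p : Polynomial ℝ) : Polynomial ℝ :=
  Polynomial.C ω⁻¹ * (p.comp (Polynomial.X + Polynomial.C ω) - p)

/-- A doubly indexed family of real polynomials is a multiple `Δ_ω`-Appell polynomial set if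
`Δ_ω P_{n₁,n₂} = n₁ P_{n₁-1,n₂} + n₂ P_{n₁,n₂-1}`, where a term whose index would be
negative is omitted (its coefficient `nᵢ` is `0`). -/
def IsMultipleDeltaAppell (ω : ℝ) (P : ℕ → ℕ → Polynomial ℝ) : Prop :=
  ∀ n₁ n₂ : ℕ, deltaOmega ω (P n₁ n₂) =
    Polynomial.C (n₁ : ℝ) * P (n₁ - 1) n₂ + Polynomial.C (n₂ : ℝ) * P n₁ (n₂ - 1)

noncomputable def ffP (ω : ℝ) (k : ℕ) : Polynomial ℝ :=
  ∏ j ∈ Finset.range k, (X - C ((j : ℝ) * ω))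

lemma ffP_eval (ω y : ℝ) (k : ℕ) : (ffP ω k).eval y = genFallingFactorial ω y k := by
  simp [ffP, genFallingFactorial, Polynomial.eval_prod]

lemma ffP_eval_zero (ω : ℝ) (k : ℕ) : (ffP ω k).eval 0 = if k = 0 then 1 else 0 := by
  cases k with
  | zero => simp [ffP]
  | succ n => simp [ffP, Finset.prod_range_succ']

lemma deltaOmega_add (ω : ℝ) (p q : Polynomial ℝ) :
    deltaOmega ω (p + q) = deltaOmega ω p + deltaOmega ω q := by
  simp only [deltaOmega, add_comp]; ring

lemma deltaOmega_sub (ω : ℝ) (p q : Polynomial ℝ) :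
    deltaOmega ω (p - q) = deltaOmega ω p - deltaOmega ω q := by
  simp only [deltaOmega, sub_comp]; ring

lemma deltaOmega_C_mul (ω a : ℝ) (p : Polynomial ℝ) :
    deltaOmega ω (C a * p) = C a * deltaOmega ω p := by
  simp only [deltaOmega, mul_comp, C_comp]; ring

lemma deltaOmega_zero (ω : ℝ) : deltaOmega ω 0 = 0 := by simp [deltaOmega]

lemma deltaOmega_sum (ω : ℝ) {ι : Type*} (s : Finset ι) (f : ι → Polynomial ℝ) :
    deltaOmega ω (∑ i ∈ s, f i) = ∑ i ∈ s, deltaOmega ω (f i) := by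
  induction s using Finset.cons_induction with
  | empty => simp [deltaOmega_zero]
  | cons a s ha ih => simp [Finset.sum_cons, deltaOmega_add, ih]

lemma deltaOmega_ffP (ω : ℝ) (hω : ω ≠ 0) (k : ℕ) :
    deltaOmega ω (ffP ω k) = C (k : ℝ) * ffP ω (k - 1) := by
  cases k with
  | zero => simp [deltaOmega, ffP]
  | succ n =>
    have hcomp : (ffP ω (n + 1)).comp (X + C ω) = (X + C ω) * ffP ω n := by
      unfold ffP
      rw [Polynomial.prod_comp, Finset.prod_range_succ']
      have h1 : ∀ j : ℕ, (X - C ((j : ℝ) * ω)).comp (X + C ω)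
          = X + C ω - C ((j : ℝ) * ω) := by intro j; simp [sub_comp]
      have h2 : ∀ j : ℕ, X + C ω - C (((j : ℕ) + 1 : ℕ) * ω) = X - C ((j : ℝ) * ω) := by
        intro j
        push_cast
        rw [show ((j : ℝ) + 1) * ω = (j : ℝ) * ω + ω from by ring, C_add]
        ring
      rw [Finset.prod_congr rfl fun j _ => by rw [h1 (j+1), h2 j]]
      rw [h1 0]
      simp
      ring
    have hsucc : ffP ω (n + 1) = ffP ω n * (X - C ((n : ℝ) * ω)) := by
      unfold ffP; rw [Finset.prod_range_succ]
    rw [deltaOmega, hcomp, hsucc]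
    have hc : (X + C ω) - (X - C ((n : ℝ) * ω)) = C (((n : ℝ) + 1) * ω) := by
      rw [show ((n : ℝ) + 1) * ω = ω + (n : ℝ) * ω from by ring, C_add]; ring
    have : (X + C ω) * ffP ω n - ffP ω n * (X - C ((n : ℝ) * ω))
        = C (((n : ℝ) + 1) * ω) * ffP ω n := by
      rw [← hc]; ring
    rw [this, ← mul_assoc, ← C_mul]
    have : ω⁻¹ * (((n : ℝ) + 1) * ω) = (n : ℝ) + 1 := by field_simp
    rw [this]
    norm_num

lemma eq_C_of_deltaOmega_eq_zero (ω : ℝ) (hω : ω ≠ 0) (p : Polynomial ℝ)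
    (h : deltaOmega ω p = 0) : p = C (p.eval 0) := by
  have hC : (C ω⁻¹ : Polynomial ℝ) ≠ 0 := by simp [hω]
  have hsub : p.comp (X + C ω) - p = 0 :=
    (mul_eq_zero.mp h).resolve_left hC
  have hcomp : p.comp (X + C ω) = p := by linear_combination hsub
  have hshift : ∀ x : ℝ, p.eval (x + ω) = p.eval x := by
    intro x
    conv_rhs => rw [← hcomp]
    simp [eval_comp]
  have hn : ∀ n : ℕ, p.eval ((n : ℝ) * ω) = p.eval 0 := by
    intro n
    induction n with
    | zero => simp
    | succ n ih =>
      push_cast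
      rw [show ((n : ℝ) + 1) * ω = (n : ℝ) * ω + ω from by ring, hshift, ih]
  have hq : p - C (p.eval 0) = 0 := by
    apply Polynomial.eq_zero_of_infinite_isRoot
    apply Set.Infinite.mono (s := Set.range (fun n : ℕ => (n : ℝ) * ω))
    · rintro _ ⟨n, rfl⟩
      simp [Polynomial.IsRoot, hn n]
    · apply Set.infinite_range_of_injective
      intro a b hab
      have : (a : ℝ) = b := mul_right_cancel₀ hω hab
      exact_mod_cast this
  linear_combination hq

lemma deltaOmega_ext (ω : ℝ) (hω : ω ≠ 0) (p q : Polynomial ℝ)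
    (h : deltaOmega ω p = deltaOmega ω q) (h0 : p.eval 0 = q.eval 0) : p = q := by
  have h1 : deltaOmega ω (p - q) = 0 := by rw [deltaOmega_sub, h, sub_self]
  have h2 := eq_C_of_deltaOmega_eq_zero ω hω _ h1
  have h3 : (p - q).eval 0 = 0 := by simp [h0]
  rw [h3, map_zero] at h2
  linear_combination h2

lemma deltaOmega_comp (ω : ℝ) (p : Polynomial ℝ) (x : ℝ) :
    deltaOmega ω (p.comp (C x + X)) = (deltaOmega ω p).comp (C x + X) := by
  simp only [deltaOmega, mul_comp, sub_comp, C_comp, Polynomial.comp_assoc]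
  have : (C x + X).comp (X + C ω) = (X + C ω).comp (C x + X) := by
    simp [add_comp]; ring
  rw [this]

lemma addition_poly (ω : ℝ) (hω : ω ≠ 0) (P : ℕ → ℕ → Polynomial ℝ)
    (hP : ∀ n₁ n₂ : ℕ, deltaOmega ω (P n₁ n₂) =
      Polynomial.C (n₁ : ℝ) * P (n₁ - 1) n₂ + Polynomial.C (n₂ : ℝ) * P n₁ (n₂ - 1)) :
    ∀ N n₁ n₂ : ℕ, n₁ + n₂ ≤ N → ∀ x : ℝ,
      (P n₁ n₂).comp (C x + X) =
        ∑ k₁ ∈ Finset.range (n₁ + 1), ∑ k₂ ∈ Finset.range (n₂ + 1),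
          C ((n₁.choose k₁ : ℝ) * (n₂.choose k₂ : ℝ) * (P (n₁ - k₁) (n₂ - k₂)).eval x)
            * ffP ω (k₁ + k₂) := by
  intro N
  induction N with
  | zero =>
    intro n₁ n₂ h x
    obtain ⟨rfl, rfl⟩ : n₁ = 0 ∧ n₂ = 0 := by omega
    have h0 : deltaOmega ω (P 0 0) = 0 := by
      rw [hP 0 0]; simp
    rw [eq_C_of_deltaOmega_eq_zero ω hω _ h0]
    simp [ffP]
    rw [eq_C_of_deltaOmega_eq_zero ω hω _ h0]
    simp
  | succ N ih =>
    intro n₁ n₂ h x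
    apply deltaOmega_ext ω hω
    · -- equality of deltas
      rw [deltaOmega_comp, hP n₁ n₂, add_comp, mul_comp, mul_comp, C_comp, C_comp]
      have hsplit : deltaOmega ω (∑ k₁ ∈ Finset.range (n₁ + 1), ∑ k₂ ∈ Finset.range (n₂ + 1),
            C ((n₁.choose k₁ : ℝ) * (n₂.choose k₂ : ℝ) * (P (n₁ - k₁) (n₂ - k₂)).eval x)
              * ffP ω (k₁ + k₂))
          = (∑ k₁ ∈ Finset.range (n₁ + 1), ∑ k₂ ∈ Finset.range (n₂ + 1),
              C ((n₁.choose k₁ : ℝ) * (n₂.choose k₂ : ℝ) * (P (n₁ - k₁) (n₂ - k₂)).eval x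
                * (k₁ : ℝ)) * ffP ω (k₁ + k₂ - 1))
            + (∑ k₁ ∈ Finset.range (n₁ + 1), ∑ k₂ ∈ Finset.range (n₂ + 1),
              C ((n₁.choose k₁ : ℝ) * (n₂.choose k₂ : ℝ) * (P (n₁ - k₁) (n₂ - k₂)).eval x
                * (k₂ : ℝ)) * ffP ω (k₁ + k₂ - 1)) := by
        rw [deltaOmega_sum, ← Finset.sum_add_distrib]
        refine Finset.sum_congr rfl fun k₁ _ => ?_
        rw [deltaOmega_sum, ← Finset.sum_add_distrib]
        refine Finset.sum_congr rfl fun k₂ _ => ?_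
        rw [deltaOmega_C_mul, deltaOmega_ffP ω hω, ← mul_assoc, ← C_mul,
          ← add_mul, ← C_add]
        congr 2
        push_cast
        ring
      rw [hsplit]
      have hA : (∑ k₁ ∈ Finset.range (n₁ + 1), ∑ k₂ ∈ Finset.range (n₂ + 1),
              C ((n₁.choose k₁ : ℝ) * (n₂.choose k₂ : ℝ) * (P (n₁ - k₁) (n₂ - k₂)).eval x
                * (k₁ : ℝ)) * ffP ω (k₁ + k₂ - 1))
          = C (n₁ : ℝ) * (P (n₁ - 1) n₂).comp (C x + X) := by
        rcases n₁ with _ | m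
        · simp
        · simp only [Nat.add_sub_cancel]
          rw [ih m n₂ (by omega) x, Finset.mul_sum]
          conv_lhs => rw [Finset.sum_range_succ']
          simp only [Nat.cast_zero, mul_zero, map_zero, zero_mul, Finset.sum_const_zero,
            add_zero]
          refine Finset.sum_congr rfl fun j _ => ?_
          rw [Finset.mul_sum]
          refine Finset.sum_congr rfl fun k₂ _ => ?_
          have hidx : j + 1 + k₂ - 1 = j + k₂ := by omega
          have hidx2 : m + 1 - (j + 1) = m - j := by omega
          rw [hidx, hidx2, ← mul_assoc, ← C_mul]
          congr 2
          have hch : ((m + 1 : ℕ) : ℝ) * ((m.choose j : ℕ) : ℝ)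
              = (((m + 1).choose (j + 1) : ℕ) : ℝ) * (((j + 1 : ℕ)) : ℝ) := by
            exact_mod_cast Nat.add_one_mul_choose_eq m j
          push_cast at hch ⊢
          linear_combination ((n₂.choose k₂ : ℝ) * (P (m - j) (n₂ - k₂)).eval x) * hch.symm
      have hB : (∑ k₁ ∈ Finset.range (n₁ + 1), ∑ k₂ ∈ Finset.range (n₂ + 1),
              C ((n₁.choose k₁ : ℝ) * (n₂.choose k₂ : ℝ) * (P (n₁ - k₁) (n₂ - k₂)).eval x
                * (k₂ : ℝ)) * ffP ω (k₁ + k₂ - 1))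
          = C (n₂ : ℝ) * (P n₁ (n₂ - 1)).comp (C x + X) := by
        rcases n₂ with _ | l
        · simp
        · simp only [Nat.add_sub_cancel]
          rw [ih n₁ l (by omega) x, Finset.mul_sum]
          refine Finset.sum_congr rfl fun k₁ _ => ?_
          conv_lhs => rw [Finset.sum_range_succ']
          simp only [Nat.cast_zero, mul_zero, map_zero, zero_mul, Finset.sum_const_zero,
            add_zero]
          rw [Finset.mul_sum]
          refine Finset.sum_congr rfl fun j _ => ?_
          have hidx : k₁ + (j + 1) - 1 = k₁ + j := by omega
          have hidx2 : l + 1 - (j + 1) = l - j := by omega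
          rw [hidx, hidx2, ← mul_assoc, ← C_mul]
          congr 2
          have hch : ((l + 1 : ℕ) : ℝ) * ((l.choose j : ℕ) : ℝ)
              = (((l + 1).choose (j + 1) : ℕ) : ℝ) * (((j + 1 : ℕ)) : ℝ) := by
            exact_mod_cast Nat.add_one_mul_choose_eq l j
          push_cast at hch ⊢
          linear_combination ((n₁.choose k₁ : ℝ) * (P (n₁ - k₁) (l - j)).eval x) * hch.symm
      rw [hA, hB]
    · -- equality of values at 0
      have h1 : ∀ k₁ k₂ : ℕ,
          Polynomial.eval 0 (C ((n₁.choose k₁ : ℝ) * (n₂.choose k₂ : ℝ)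
              * (P (n₁ - k₁) (n₂ - k₂)).eval x) * ffP ω (k₁ + k₂))
          = if k₁ = 0 then (if k₂ = 0 then (P n₁ n₂).eval x else 0) else 0 := by
        intro k₁ k₂
        rw [eval_mul, eval_C, ffP_eval_zero]
        rcases k₁ with _ | k₁ <;> rcases k₂ with _ | k₂ <;> simp
      rw [eval_comp, Polynomial.eval_finset_sum]
      have h2 : ∀ k₁ ∈ Finset.range (n₁ + 1),
          Polynomial.eval 0 (∑ k₂ ∈ Finset.range (n₂ + 1),
            C ((n₁.choose k₁ : ℝ) * (n₂.choose k₂ : ℝ)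
              * (P (n₁ - k₁) (n₂ - k₂)).eval x) * ffP ω (k₁ + k₂))
          = if k₁ = 0 then (P n₁ n₂).eval x else 0 := by
        intro k₁ _
        rw [Polynomial.eval_finset_sum, Finset.sum_congr rfl fun k₂ _ => h1 k₁ k₂]
        by_cases hk : k₁ = 0
        · subst hk
          simp [Finset.sum_ite_eq']
        · simp [hk]
      rw [Finset.sum_congr rfl h2]
      simp [Finset.sum_ite_eq']

lemma gff_zero (ω y : ℝ) : genFallingFactorial ω y 0 = 1 := by
  simp [genFallingFactorial]

lemma gff_self_one (ω : ℝ) : genFallingFactorial ω ω 1 = ω := by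
  simp [genFallingFactorial]

lemma gff_self_eq_zero (ω : ℝ) : ∀ n, 2 ≤ n → genFallingFactorial ω ω n = 0 := by
  intro n hn
  apply Finset.prod_eq_zero (Finset.mem_range.mpr (show (1 : ℕ) < n by omega))
  simp

lemma sum_c2 (n : ℕ) (c : ℕ → ℝ) (hc : ∀ k, c (k + 1 + 1) = 0) :
    ∑ k ∈ Finset.range (n + 1 + 1), c k = c 0 + c 1 := by
  induction n with
  | zero => simp [Finset.sum_range_succ]
  | succ n ih => rw [Finset.sum_range_succ, hc n, add_zero, ih]


/-- A polynomial set is multiple `Δ_ω`-Appell iff it satisfies the addition formula. -/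
theorem multipleDeltaAppell_iff_addition (ω : ℝ) (hω : ω ≠ 0)
    (P : ℕ → ℕ → Polynomial ℝ) (hdeg : ∀ n₁ n₂ : ℕ, (P n₁ n₂).natDegree = n₁ + n₂) :
    IsMultipleDeltaAppell ω P ↔
      ∀ (n₁ n₂ : ℕ) (x y : ℝ),
        (P n₁ n₂).eval (x + y) =
          ∑ k₁ ∈ Finset.range (n₁ + 1), ∑ k₂ ∈ Finset.range (n₂ + 1),
            (n₁.choose k₁ : ℝ) * (n₂.choose k₂ : ℝ) * (P (n₁ - k₁) (n₂ - k₂)).eval x *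
              genFallingFactorial ω y (k₁ + k₂) := by
  constructor
  · intro hP n₁ n₂ x y
    have h := addition_poly ω hω P hP (n₁ + n₂) n₁ n₂ le_rfl x
    have h2 := congrArg (Polynomial.eval y) h
    rw [eval_comp] at h2
    simp only [eval_add, eval_C, eval_X] at h2
    rw [Polynomial.eval_finset_sum] at h2
    rw [h2]
    refine Finset.sum_congr rfl fun k₁ _ => ?_
    rw [Polynomial.eval_finset_sum]
    refine Finset.sum_congr rfl fun k₂ _ => ?_
    rw [eval_mul, eval_C, ffP_eval]
  · intro h n₁ n₂
    apply Polynomial.funext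
    intro x
    simp only [deltaOmega, eval_mul, eval_sub, eval_comp, eval_add, eval_C, eval_X]
    rw [h n₁ n₂ x ω]
    have hv0 := gff_zero ω ω
    have hv1 := gff_self_one ω
    have hv2 := gff_self_eq_zero ω
    rcases n₁ with _ | m <;> rcases n₂ with _ | l
    · simp [hv0]
    · rw [Finset.sum_range_one,
        sum_c2 l _ (by intro k; rw [hv2 (0 + (k + 1 + 1)) (by omega), mul_zero])]
      simp only [Nat.choose_zero_right, Nat.choose_one_right, Nat.add_sub_cancel,
        Nat.cast_one, Nat.cast_zero, Nat.cast_add, Nat.sub_zero]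
      rw [show (0 + 0 : ℕ) = 0 from rfl, show (0 + 1 : ℕ) = 1 from rfl, hv0, hv1]
      field_simp
      ring
    · rw [sum_c2 m _ (by
        intro k
        apply Finset.sum_eq_zero
        intro k₂ _
        rw [hv2 (k + 1 + 1 + k₂) (by omega), mul_zero])]
      rw [Finset.sum_range_one, Finset.sum_range_one]
      simp only [Nat.choose_zero_right, Nat.choose_one_right, Nat.add_sub_cancel,
        Nat.cast_one, Nat.cast_zero, Nat.cast_add, Nat.sub_zero]
      rw [show (0 + 0 : ℕ) = 0 from rfl, show (1 + 0 : ℕ) = 1 from rfl, hv0, hv1]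
      field_simp
      ring
    · rw [sum_c2 m _ (by
        intro k
        apply Finset.sum_eq_zero
        intro k₂ _
        rw [hv2 (k + 1 + 1 + k₂) (by omega), mul_zero])]
      rw [sum_c2 l _ (by intro k; rw [hv2 (0 + (k + 1 + 1)) (by omega), mul_zero])]
      rw [sum_c2 l _ (by intro k; rw [hv2 (1 + (k + 1 + 1)) (by omega), mul_zero])]
      rw [hv2 (1 + 1) (by omega)]
      simp only [Nat.choose_zero_right, Nat.choose_one_right, Nat.add_sub_cancel,
        Nat.cast_one, Nat.cast_zero, Nat.cast_add, Nat.sub_zero]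
      rw [hv0, hv1]
      field_simp
      ring
end
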